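/- For every assortment S ∈ 𝒮 and every tuple (i_1,…,i_M) ∈ L, the set S ∩ I_{i_1⋯i_M}(S) is nonempty and ρ_{i_1⋯i_M}(S) = min_{i ∈ S ∩ I_{i_1⋯i_M}(S)} r(i). -/
import Mathlib


namespace RobustAssortment

/-- `i` is the most preferred product of the assortment `S` under the ranking `σ`. -/
def isTop {n : ℕ} (σ : Equiv.Perm (Fin (n + 1))) (S : Finset (Fin (n + 1)))
    (i : Fin (n + 1)) : Prop :=
  i ∈ S ∧ ∀ j ∈ S, σ i ≤ σ j

instance {n : ℕ} (σ : Equiv.Perm (Fin (n + 1))) (S : Finset (Fin (n + 1)))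
    (i : Fin (n + 1)) : Decidable (isTop σ S i) := by
  unfold isTop; infer_instance
/-- Membership in the set `L` of tuples of products compatible with a common ranking. -/
def memL {n M : ℕ} (Sm : Fin M → Finset (Fin (n + 1)))
    (t : Fin M → Fin (n + 1)) : Prop :=
  ∃ σ : Equiv.Perm (Fin (n + 1)), ∀ m : Fin M, isTop σ (Sm m) (t m)

instance {n M : ℕ} (Sm : Fin M → Finset (Fin (n + 1))) (t : Fin M → Fin (n + 1)) :
    Decidable (memL Sm t) := by
  unfold memL; infer_instance
/-- The quantity `ρ_{i_1⋯i_M}(S)`: the minimum revenue among products of `S` that can be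
the top of `S` under a ranking corresponding to the tuple `t`. -/
noncomputable def rho {n M : ℕ} (Sm : Fin M → Finset (Fin (n + 1)))
    (r : Fin (n + 1) → ℝ) (t : Fin M → Fin (n + 1)) (S : Finset (Fin (n + 1))) : ℝ :=
  sInf {x | ∃ i ∈ S, (∃ σ : Equiv.Perm (Fin (n + 1)),
    (∀ m : Fin M, isTop σ (Sm m) (t m)) ∧ isTop σ S i) ∧ x = r i}
/-- Directed edge relation of the graph `G_{i_1⋯i_M}`: an edge from `x` to `t m` for every
`m` and every `x ∈ S_m` with `x ≠ t m`. -/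
def Gedge {n M : ℕ} (Sm : Fin M → Finset (Fin (n + 1)))
    (t : Fin M → Fin (n + 1)) (x y : Fin (n + 1)) : Prop :=
  ∃ m : Fin M, y = t m ∧ x ∈ Sm m ∧ x ≠ t m

section Aux

variable {n M : ℕ} {Sm : Fin M → Finset (Fin (n + 1))} {t : Fin M → Fin (n + 1)}

lemma gedge_lt {σ : Equiv.Perm (Fin (n + 1))} (hσ : ∀ m, isTop σ (Sm m) (t m))
    {x y : Fin (n + 1)} (h : Gedge Sm t x y) : σ y < σ x := by
  obtain ⟨m, rfl, hx, hne⟩ := h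
  exact ((hσ m).2 x hx).lt_of_ne fun he => hne (σ.injective he).symm

lemma transGen_lt {σ : Equiv.Perm (Fin (n + 1))} (hσ : ∀ m, isTop σ (Sm m) (t m))
    {x y : Fin (n + 1)} (h : Relation.TransGen (Gedge Sm t) x y) : σ y < σ x := by
  induction h with
  | single h => exact gedge_lt hσ h
  | tail _ h ih => exact (gedge_lt hσ h).trans ih

lemma transGen_target {x y : Fin (n + 1)} (h : Relation.TransGen (Gedge Sm t) x y) :
    ∃ m, y = t m := by
  cases h with
  | single h => obtain ⟨m, rfl, -, -⟩ := h; exact ⟨m, rfl⟩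
  | tail _ h => obtain ⟨m, rfl, -, -⟩ := h; exact ⟨m, rfl⟩

lemma top_mem_I {σ : Equiv.Perm (Fin (n + 1))} (hσ : ∀ m, isTop σ (Sm m) (t m))
    {S : Finset (Fin (n + 1))} {i : Fin (n + 1)} (hi : isTop σ S i) :
    ∀ m, t m ∈ S → ¬ Relation.TransGen (Gedge Sm t) i (t m) := by
  intro m hm h
  exact absurd (hi.2 _ hm) (not_le.mpr (transGen_lt hσ h))

lemma exists_perm {σ0 : Equiv.Perm (Fin (n + 1))} (hσ0 : ∀ m, isTop σ0 (Sm m) (t m))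
    {S : Finset (Fin (n + 1))} {i : Fin (n + 1)} (hiS : i ∈ S)
    (hI : ∀ m, t m ∈ S → ¬ Relation.TransGen (Gedge Sm t) i (t m)) :
    ∃ σ : Equiv.Perm (Fin (n + 1)), (∀ m, isTop σ (Sm m) (t m)) ∧ isTop σ S i := by
  classical
  set P : Fin (n + 1) → Prop := fun j => j = i ∨ Relation.TransGen (Gedge Sm t) i j with hP
  have hPi : P i := Or.inl rfl
  have hPclosed : ∀ x y, P x → Gedge Sm t x y → P y := by
    intro x y hx hxy
    rcases hx with rfl | hx
    · exact Or.inr (Relation.TransGen.single hxy)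
    · exact Or.inr (hx.tail hxy)
  set f : Fin (n + 1) → ℕ := fun j => (if P j then 0 else n + 1) + (σ0 j : ℕ) with hf
  have hflt : ∀ j k, P j → ¬ P k → f j < f k := by
    intro j k hj hk
    simp only [hf, if_pos hj, if_neg hk]
    have := (σ0 j).isLt
    omega
  have hfle : ∀ j k, P j → P k → (f j ≤ f k ↔ σ0 j ≤ σ0 k) := by
    intro j k hj hk
    simp only [hf, if_pos hj, if_pos hk]
    rw [Fin.le_def]; omega
  have hfle' : ∀ j k, ¬ P j → ¬ P k → (f j ≤ f k ↔ σ0 j ≤ σ0 k) := by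
    intro j k hj hk
    simp only [hf, if_neg hj, if_neg hk]
    rw [Fin.le_def]; omega
  have hfinj : Function.Injective f := by
    intro j k h
    by_cases hj : P j <;> by_cases hk : P k
    · apply σ0.injective
      apply Fin.val_injective
      simp only [hf, if_pos hj, if_pos hk] at h
      omega
    · exact absurd h (hflt j k hj hk).ne
    · exact absurd h.symm (hflt k j hk hj).ne
    · apply σ0.injective
      apply Fin.val_injective
      simp only [hf, if_neg hj, if_neg hk] at h
      omega
  set T : Finset ℕ := Finset.image f Finset.univ with hT
  have hTcard : T.card = n + 1 := by
    rw [hT, Finset.card_image_of_injective _ hfinj, Finset.card_univ, Fintype.card_fin]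
  set e := T.orderIsoOfFin hTcard with he
  have hmem : ∀ j, f j ∈ T := fun j => Finset.mem_image_of_mem f (Finset.mem_univ j)
  set g : Fin (n + 1) → Fin (n + 1) := fun j => e.symm ⟨f j, hmem j⟩ with hg
  have hginj : Function.Injective g := by
    intro j k h
    exact hfinj (congrArg Subtype.val (e.symm.injective h))
  let σ : Equiv.Perm (Fin (n + 1)) :=
    Equiv.ofBijective g (Finite.injective_iff_bijective.mp hginj)
  have hσle : ∀ j k, σ j ≤ σ k ↔ f j ≤ f k := by
    intro j k
    show g j ≤ g k ↔ _
    rw [hg]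
    simp only [e.symm.le_iff_le]
    exact Subtype.mk_le_mk
  refine ⟨σ, fun m => ⟨(hσ0 m).1, fun x hx => ?_⟩, hiS, fun j hj => ?_⟩
  · rw [hσle]
    by_cases hxt : x = t m
    · subst hxt; exact le_rfl
    have hedge : Gedge Sm t x (t m) := ⟨m, rfl, hx, hxt⟩
    by_cases hPx : P x
    · have hPt : P (t m) := hPclosed x (t m) hPx hedge
      exact (hfle _ _ hPt hPx).mpr ((hσ0 m).2 x hx)
    · by_cases hPt : P (t m)
      · exact (hflt _ _ hPt hPx).le
      · exact (hfle' _ _ hPt hPx).mpr ((hσ0 m).2 x hx)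
  · rw [hσle]
    by_cases hPj : P j
    · rcases hPj with rfl | hPj
      · exact le_rfl
      · obtain ⟨m, rfl⟩ := transGen_target hPj
        exact absurd hPj (hI m hj)
    · exact (hflt i j hPi hPj).le

end Aux

/-- Proposition 5 of the paper: `ρ_{i_1⋯i_M}(S)` is the minimum of `r` over
`S ∩ I_{i_1⋯i_M}(S)`, where `I_{i_1⋯i_M}(S)` is the set of vertices with no directed path
to any product of `S` among `t 1, …, t M`; in particular that set is nonempty. -/
theorem statement17 (n M : ℕ) (hn : 1 ≤ n) (hM : 1 ≤ M)
    (r : Fin (n + 1) → ℝ) (hr0 : r 0 = 0) (hr : StrictMono r)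
    (Sm : Fin M → Finset (Fin (n + 1))) (hSm0 : ∀ m, (0 : Fin (n + 1)) ∈ Sm m)
    (S : Finset (Fin (n + 1))) (hS : 0 ∈ S)
    (t : Fin M → Fin (n + 1)) (ht : memL Sm t) :
    ({i : Fin (n + 1) | i ∈ S ∧
        ∀ m : Fin M, t m ∈ S → ¬ Relation.TransGen (Gedge Sm t) i (t m)}.Nonempty) ∧
      IsLeast
        (r '' {i : Fin (n + 1) | i ∈ S ∧
          ∀ m : Fin M, t m ∈ S → ¬ Relation.TransGen (Gedge Sm t) i (t m)})
        (rho Sm r t S) := by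
  obtain ⟨σ0, hσ0⟩ := ht
  obtain ⟨i0, hi0S, hi0⟩ := S.exists_min_image σ0 ⟨0, hS⟩
  have hi0top : isTop σ0 S i0 := ⟨hi0S, hi0⟩
  set Iset : Set (Fin (n + 1)) := {i | i ∈ S ∧
    ∀ m : Fin M, t m ∈ S → ¬ Relation.TransGen (Gedge Sm t) i (t m)} with hIset
  have hne : Iset.Nonempty := ⟨i0, hi0S, top_mem_I hσ0 hi0top⟩
  have hAeq : {x | ∃ i ∈ S, (∃ σ : Equiv.Perm (Fin (n + 1)),
      (∀ m : Fin M, isTop σ (Sm m) (t m)) ∧ isTop σ S i) ∧ x = r i} = r '' Iset := by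
    ext x
    constructor
    · rintro ⟨i, hiS, ⟨σ, hσ, hitop⟩, rfl⟩
      exact ⟨i, ⟨hiS, top_mem_I hσ hitop⟩, rfl⟩
    · rintro ⟨i, ⟨hiS, hI⟩, rfl⟩
      obtain ⟨σ, h1, h2⟩ := exists_perm hσ0 hiS hI
      exact ⟨i, hiS, ⟨σ, h1, h2⟩, rfl⟩
  refine ⟨hne, ?_⟩
  have hfin : (r '' Iset).Finite := (Set.toFinite Iset).image r
  have hne' : (r '' Iset).Nonempty := hne.image r
  unfold rho
  rw [hAeq]
  exact ⟨hne'.csInf_mem hfin, fun x hx => csInf_le hfin.bddBelow hx⟩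

end RobustAssortment
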